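/- For every real number x > 0, tanh(x) > x/(1 + x^2/3), i.e. tanh(x)(1 + x^2/3) > x. -/

import Mathlib

open Real

lemma aux_sinh_lt (x : ℝ) (hx : 0 < x) : Real.sinh x < x * Real.cosh x := by
  have h : StrictMonoOn (fun y : ℝ => y * Real.cosh y - Real.sinh y) (Set.Ici 0) := by
    apply strictMonoOn_of_deriv_pos (convex_Ici 0)
    · fun_prop
    · intro y hy
      simp only [interior_Ici, Set.mem_Ioi] at hy
      have : deriv (fun y : ℝ => y * Real.cosh y - Real.sinh y) y = y * Real.sinh y := by
        have h1 : HasDerivAt (fun y : ℝ => y * Real.cosh y - Real.sinh y)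
            (1 * Real.cosh y + y * Real.sinh y - Real.cosh y) y :=
          ((hasDerivAt_id y).mul (Real.hasDerivAt_cosh y)).sub (Real.hasDerivAt_sinh y)
        rw [h1.deriv]; ring
      rw [this]
      positivity
  have := h (Set.self_mem_Ici) (Set.mem_Ici.2 hx.le) hx
  simpa using this

lemma aux_main (x : ℝ) (hx : 0 < x) :
    x * Real.cosh x < Real.sinh x * (1 + x ^ 2 / 3) := by
  have h : StrictMonoOn (fun y : ℝ => Real.sinh y * (1 + y ^ 2 / 3) - y * Real.cosh y)
      (Set.Ici 0) := by
    apply strictMonoOn_of_deriv_pos (convex_Ici 0)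
    · fun_prop
    · intro y hy
      simp only [interior_Ici, Set.mem_Ioi] at hy
      have hd : deriv (fun y : ℝ => Real.sinh y * (1 + y ^ 2 / 3) - y * Real.cosh y) y
          = y / 3 * (y * Real.cosh y - Real.sinh y) := by
        have h1 : HasDerivAt (fun y : ℝ => Real.sinh y * (1 + y ^ 2 / 3) - y * Real.cosh y)
            (Real.cosh y * (1 + y ^ 2 / 3) + Real.sinh y * (2 * y / 3)
              - (1 * Real.cosh y + y * Real.sinh y)) y := by
          have := ((Real.hasDerivAt_sinh y).mul (((hasDerivAt_id y).pow 2).div_const 3 |>.const_add 1)).sub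
            ((hasDerivAt_id y).mul (Real.hasDerivAt_cosh y))
          exact this.congr_deriv (by simp only [id_eq, Pi.pow_apply]; push_cast; ring)
        rw [h1.deriv]; ring
      rw [hd]
      have := aux_sinh_lt y hy
      have : 0 < y * Real.cosh y - Real.sinh y := by linarith
      positivity
  have := h (Set.self_mem_Ici) (Set.mem_Ici.2 hx.le) hx
  simpa using this

theorem stmt_2 : ∀ x : ℝ, 0 < x →
    x < Real.tanh x * (1 + x ^ 2 / 3) := by
  intro x hx
  have hc : 0 < Real.cosh x := Real.cosh_pos x
  have h := aux_main x hx
  rw [Real.tanh_eq_sinh_div_cosh]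
  rw [div_mul_eq_mul_div, lt_div_iff₀ hc]
  linarith
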